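/- Suppose ε₀ and ε₁ are i.i.d. integrable real random variables whose common distribution is symmetric about zero. Fix any β₀, β₁ ∈ ℝ and c₀, c₁ ≥ 0, let c* = √(c₁² + 2c₀), and define b₁ = β₁ + ε₁ − ε₀ − c₁ if β₁ + ε₁ − ε₀ ≥ c*, b₁ = β₁ + ε₁ − ε₀ + c₁ if β₁ + ε₁ − ε₀ ≤ −c*, and b₁ = 0 otherwise, with b₀ = (y₀ + y₁ − b₁)/2 where y₀ = β₀ + ε₀ and y₁ = β₀ + β₁ + ε₁. Then for every x ∈ {0,1} and r ∈ {0,1}: E[(b₀ + b₁·x − β₀ − β₁·x)²] ≤ E[(b₀ + b₁·r − β₀ − β₁·x)²]. That is, the penalized estimator is incentive-compatible under symmetrically distributed noise. -/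

import Mathlib

open MeasureTheory ProbabilityTheory

noncomputable def sg (cs c1 z : ℝ) : ℝ :=
  if cs ≤ z then z - c1 else if z ≤ -cs then z + c1 else 0

lemma sg_meas (cs c1 : ℝ) : Measurable (sg cs c1) := by
  unfold sg
  exact Measurable.ite (measurableSet_le measurable_const measurable_id)
    (measurable_id.sub measurable_const)
    (Measurable.ite (measurableSet_le measurable_id measurable_const)
      (measurable_id.add measurable_const) measurable_const)

lemma sg_mono {cs c1 : ℝ} (h0 : 0 ≤ c1) (h1 : c1 ≤ cs) : Monotone (sg cs c1) := by
  intro a b hab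
  unfold sg
  split_ifs <;> linarith

lemma sg_odd {cs c1 : ℝ} (h0 : 0 ≤ c1) (h1 : c1 ≤ cs) (z : ℝ) :
    sg cs c1 (-z) = -sg cs c1 z := by
  unfold sg
  split_ifs <;> linarith

lemma sg_abs_le {cs c1 : ℝ} (h0 : 0 ≤ c1) (h1 : c1 ≤ cs) (z : ℝ) :
    |sg cs c1 z| ≤ |z| := by
  have h2 := le_abs_self z
  have h3 := neg_abs_le z
  have h4 := abs_nonneg z
  rw [abs_le]; unfold sg
  split_ifs <;> constructor <;> linarith

lemma sg_sub_le {cs c1 : ℝ} (h0 : 0 ≤ c1) (h1 : c1 ≤ cs) (z : ℝ) :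
    |sg cs c1 z - z| ≤ cs := by
  rw [abs_le]; unfold sg
  split_ifs with ha hb
  · constructor <;> linarith
  · constructor <;> linarith
  · push_neg at ha hb; constructor <;> linarith

lemma sg_key {cs c1 : ℝ} (h0 : 0 ≤ c1) (h1 : c1 ≤ cs) (b d : ℝ) :
    0 ≤ b * (sg cs c1 (b + d) + sg cs c1 (b - d)) := by
  rcases le_total 0 b with hb | hb
  · have h2 : sg cs c1 (-(b + d)) ≤ sg cs c1 (b - d) := sg_mono h0 h1 (by linarith)
    rw [sg_odd h0 h1] at h2
    exact mul_nonneg hb (by linarith)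
  · have h2 : sg cs c1 (b - d) ≤ sg cs c1 (-(b + d)) := sg_mono h0 h1 (by linarith)
    rw [sg_odd h0 h1] at h2
    calc (0:ℝ) ≤ (-b) * (-(sg cs c1 (b + d) + sg cs c1 (b - d))) :=
          mul_nonneg (by linarith) (by linarith)
      _ = b * (sg cs c1 (b + d) + sg cs c1 (b - d)) := by ring

lemma bdd_integrable {Ω : Type*} [MeasurableSpace Ω] {μ : Measure Ω} [IsFiniteMeasure μ]
    {v : Ω → ℝ} (hv : AEStronglyMeasurable v μ) {K : ℝ} (hK : ∀ ω, |v ω| ≤ K) :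
    Integrable v μ :=
  Integrable.mono' (integrable_const K) hv (ae_of_all _ fun ω => by simpa using hK ω)

lemma sq_shift {Ω : Type*} [MeasurableSpace Ω] {μ : Measure Ω} [IsFiniteMeasure μ]
    {w v : Ω → ℝ} (hwm : Measurable w) (hvm : Measurable v) (hw : Integrable w μ)
    {K : ℝ} (hK : ∀ ω, |v ω| ≤ K)
    (h2 : Integrable (fun ω => (w ω) ^ 2) μ) :
    Integrable (fun ω => (w ω + v ω) ^ 2) μ := by
  set K' : ℝ := max K 0 with hK'
  have hK'0 : 0 ≤ K' := le_max_right _ _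
  have hKK : ∀ ω, |v ω| ≤ K' := fun ω => le_trans (hK ω) (le_max_left _ _)
  have hcrossm : Measurable fun ω => 2 * w ω * v ω + v ω ^ 2 :=
    ((hwm.const_mul 2).mul hvm).add (hvm.pow_const 2)
  have hbound : ∀ ω, ‖2 * w ω * v ω + v ω ^ 2‖ ≤ 2 * K' * |w ω| + K' ^ 2 := by
    intro ω
    rw [Real.norm_eq_abs]
    have h1 : |2 * w ω * v ω + v ω ^ 2| ≤ |2 * w ω * v ω| + |v ω ^ 2| := abs_add_le _ _
    have h2' : |2 * w ω * v ω| = 2 * |w ω| * |v ω| := by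
      rw [abs_mul, abs_mul]; norm_num
    have h3 : |v ω ^ 2| = |v ω| ^ 2 := by rw [abs_pow]
    nlinarith [hKK ω, abs_nonneg (w ω), abs_nonneg (v ω)]
  have hcross : Integrable (fun ω => 2 * w ω * v ω + v ω ^ 2) μ := by
    refine Integrable.mono' (((hw.abs.const_mul (2 * K')).add (integrable_const (K' ^ 2))))
      hcrossm.aestronglyMeasurable (ae_of_all _ fun ω => ?_)
    exact hbound ω
  exact (h2.add hcross).congr (ae_of_all _ fun ω => by simp only [Pi.add_apply]; ring)

lemma sq_shift_rev {Ω : Type*} [MeasurableSpace Ω] {μ : Measure Ω} [IsFiniteMeasure μ]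
    {w v : Ω → ℝ} (hwm : Measurable w) (hvm : Measurable v) (hw : Integrable w μ)
    {K : ℝ} (hK : ∀ ω, |v ω| ≤ K)
    (h2 : Integrable (fun ω => (w ω + v ω) ^ 2) μ) :
    Integrable (fun ω => (w ω) ^ 2) μ := by
  have hvi : Integrable v μ := bdd_integrable hvm.aestronglyMeasurable hK
  have h := sq_shift (hwm.add hvm) hvm.neg (hw.add hvi) (K := K)
    (fun ω => by simpa using hK ω) h2
  exact h.congr (ae_of_all _ fun ω => by simp only [Pi.add_apply, Pi.neg_apply]; ring)

/-- With `ε₀, ε₁` i.i.d. integrable and symmetric about zero,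
the penalized estimator (`b₁ = β₁ + ε₁ − ε₀ − c₁` if `β₁ + ε₁ − ε₀ ≥ c*`,
`b₁ = β₁ + ε₁ − ε₀ + c₁` if `β₁ + ε₁ − ε₀ ≤ −c*`, `b₁ = 0` otherwise,
`c* = √(c₁² + 2c₀)`, `b₀ = (y₀ + y₁ − b₁)/2`) is incentive-compatible:
for every `β₀, β₁` and every `x, r ∈ {0,1}`,
`E[(b₀ + b₁·x − β₀ − β₁·x)²] ≤ E[(b₀ + b₁·r − β₀ − β₁·x)²]`. -/
theorem stmt7 {Ω : Type*} [MeasurableSpace Ω] (μ : Measure Ω)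
    [IsProbabilityMeasure μ] (ε₀ ε₁ : Ω → ℝ)
    (hmeas₀ : Measurable ε₀) (hmeas₁ : Measurable ε₁)
    (hint₀ : Integrable ε₀ μ) (hint₁ : Integrable ε₁ μ)
    (hindep : IndepFun ε₀ ε₁ μ) (hid : IdentDistrib ε₀ ε₁ μ μ)
    (hsym : μ.map ε₀ = μ.map (fun ω => -ε₀ ω))
    (β₀ β₁ c₀ c₁ : ℝ) (hc₀ : 0 ≤ c₀) (hc₁ : 0 ≤ c₁)
    (cstar : ℝ) (hcstar : cstar = Real.sqrt (c₁ ^ 2 + 2 * c₀))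
    (b₁ : Ω → ℝ)
    (hb₁ : ∀ ω, b₁ ω =
      if cstar ≤ β₁ + ε₁ ω - ε₀ ω then β₁ + ε₁ ω - ε₀ ω - c₁
      else if β₁ + ε₁ ω - ε₀ ω ≤ -cstar then β₁ + ε₁ ω - ε₀ ω + c₁
      else 0)
    (y₀ y₁ b₀ : Ω → ℝ)
    (hy₀ : ∀ ω, y₀ ω = β₀ + ε₀ ω) (hy₁ : ∀ ω, y₁ ω = β₀ + β₁ + ε₁ ω)
    (hb₀ : ∀ ω, b₀ ω = (y₀ ω + y₁ ω - b₁ ω) / 2) :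
    ∀ x r : ℝ, (x = 0 ∨ x = 1) → (r = 0 ∨ r = 1) →
      ∫ ω, (b₀ ω + b₁ ω * x - β₀ - β₁ * x) ^ 2 ∂μ ≤
        ∫ ω, (b₀ ω + b₁ ω * r - β₀ - β₁ * x) ^ 2 ∂μ := by
  -- basic constants
  have hcs0 : 0 ≤ cstar := hcstar ▸ Real.sqrt_nonneg _
  have hccs : c₁ ≤ cstar := by
    rw [hcstar]
    calc c₁ = Real.sqrt (c₁ ^ 2) := by rw [Real.sqrt_sq hc₁]
      _ ≤ _ := Real.sqrt_le_sqrt (by linarith)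
  have hb₁g : ∀ ω, b₁ ω = sg cstar c₁ (β₁ + ε₁ ω - ε₀ ω) := fun ω => by
    rw [hb₁ ω]; rfl
  have hZm : Measurable fun ω => β₁ + ε₁ ω - ε₀ ω := (measurable_const.add hmeas₁).sub hmeas₀
  have hb₁m : Measurable b₁ := by
    have h : b₁ = fun ω => sg cstar c₁ (β₁ + ε₁ ω - ε₀ ω) := funext hb₁g
    rw [h]; exact (sg_meas _ _).comp hZm
  have hUm : Measurable fun ω => b₁ ω - (β₁ + ε₁ ω - ε₀ ω) := hb₁m.sub hZm
  have hu : ∀ ω, |b₁ ω - (β₁ + ε₁ ω - ε₀ ω)| ≤ cstar := fun ω => by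
    rw [hb₁g ω]; exact sg_sub_le hc₁ hccs _
  -- law identities
  have hmap₀₁ : μ.map ε₀ = μ.map ε₁ := hid.map_eq
  have hneg₁ : μ.map (fun ω => -ε₁ ω) = μ.map ε₀ := by
    have h := (hid.comp measurable_neg).map_eq
    exact h.symm.trans hsym.symm
  have hneg₀ : μ.map (fun ω => -ε₀ ω) = μ.map ε₁ := hsym.symm.trans hmap₀₁
  have hind' : IndepFun (fun ω => -ε₁ ω) (fun ω => -ε₀ ω) μ :=
    hindep.symm.comp measurable_neg measurable_neg
  have hP : μ.map (fun ω => (ε₀ ω, ε₁ ω)) = (μ.map ε₀).prod (μ.map ε₁) :=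
    (indepFun_iff_map_prod_eq_prod_map_map hmeas₀.aemeasurable hmeas₁.aemeasurable).mp hindep
  have hQ : μ.map (fun ω => (-ε₁ ω, -ε₀ ω)) = (μ.map ε₀).prod (μ.map ε₁) := by
    have h := (indepFun_iff_map_prod_eq_prod_map_map hmeas₁.neg.aemeasurable
      hmeas₀.neg.aemeasurable).mp hind'
    exact h.trans (by
      show (Measure.map (fun ω => -ε₁ ω) μ).prod (Measure.map (fun ω => -ε₀ ω) μ) = _
      rw [hneg₁, hneg₀])
  have hS : μ.map (fun ω => (ε₁ ω, ε₀ ω)) = (μ.map ε₀).prod (μ.map ε₁) := by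
    have h := (indepFun_iff_map_prod_eq_prod_map_map hmeas₁.aemeasurable
      hmeas₀.aemeasurable).mp hindep.symm
    exact h.trans (by rw [hmap₀₁])
  have transfer : ∀ (φ ψ : Ω → ℝ), Measurable φ → Measurable ψ →
      μ.map (fun ω => (φ ω, ψ ω)) = (μ.map ε₀).prod (μ.map ε₁) →
      ∀ F : ℝ × ℝ → ℝ, Measurable F →
      ∫ ω, F (ε₀ ω, ε₁ ω) ∂μ = ∫ ω, F (φ ω, ψ ω) ∂μ := by
    intro φ ψ hφ hψ heq F hF
    rw [← integral_map (hmeas₀.prodMk hmeas₁).aemeasurable hF.aestronglyMeasurable,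
        ← integral_map (hφ.prodMk hψ).aemeasurable hF.aestronglyMeasurable, hP, heq]
  -- equality of the two cross integrals
  have hABeq : ∫ ω, b₁ ω * (β₁ + ε₀ ω + ε₁ ω) ∂μ = ∫ ω, b₁ ω * (β₁ - ε₀ ω - ε₁ ω) ∂μ := by
    have hF : Measurable fun p : ℝ × ℝ => sg cstar c₁ (β₁ + p.2 - p.1) * (β₁ + p.1 + p.2) :=
      ((sg_meas _ _).comp ((measurable_const.add measurable_snd).sub measurable_fst)).mul
        ((measurable_const.add measurable_fst).add measurable_snd)
    have h := transfer _ _ hmeas₁.neg hmeas₀.neg hQ _ hF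
    calc ∫ ω, b₁ ω * (β₁ + ε₀ ω + ε₁ ω) ∂μ
        = ∫ ω, sg cstar c₁ (β₁ + ε₁ ω - ε₀ ω) * (β₁ + ε₀ ω + ε₁ ω) ∂μ := by
          congr 1; funext ω; rw [hb₁g ω]
      _ = ∫ ω, sg cstar c₁ (β₁ + -ε₀ ω - -ε₁ ω) * (β₁ + -ε₁ ω + -ε₀ ω) ∂μ := h
      _ = ∫ ω, b₁ ω * (β₁ - ε₀ ω - ε₁ ω) ∂μ := by
          congr 1; funext ω
          rw [show β₁ + -ε₀ ω - -ε₁ ω = β₁ + ε₁ ω - ε₀ ω by ring, ← hb₁g ω]; ring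
  -- equality of the two sg integrals
  have hGeq : ∫ ω, sg cstar c₁ (β₁ + (ε₁ ω - ε₀ ω)) ∂μ
      = ∫ ω, sg cstar c₁ (β₁ - (ε₁ ω - ε₀ ω)) ∂μ := by
    have hF : Measurable fun p : ℝ × ℝ => sg cstar c₁ (β₁ + (p.2 - p.1)) :=
      (sg_meas _ _).comp (measurable_const.add (measurable_snd.sub measurable_fst))
    have h := transfer _ _ hmeas₁ hmeas₀ hS _ hF
    calc ∫ ω, sg cstar c₁ (β₁ + (ε₁ ω - ε₀ ω)) ∂μ
        = ∫ ω, sg cstar c₁ (β₁ + (ε₀ ω - ε₁ ω)) ∂μ := h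
      _ = ∫ ω, sg cstar c₁ (β₁ - (ε₁ ω - ε₀ ω)) ∂μ := by
          congr 1; funext ω; rw [show β₁ + (ε₀ ω - ε₁ ω) = β₁ - (ε₁ ω - ε₀ ω) by ring]
  -- integrability of the sg integrands
  have hGint₁ : Integrable (fun ω => sg cstar c₁ (β₁ + (ε₁ ω - ε₀ ω))) μ := by
    refine Integrable.mono' (((integrable_const |β₁|).add hint₁.abs).add hint₀.abs)
      ((sg_meas _ _).comp (measurable_const.add (hmeas₁.sub hmeas₀))).aestronglyMeasurable
      (ae_of_all _ fun ω => ?_)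
    rw [Real.norm_eq_abs]
    have h1 := sg_abs_le hc₁ hccs (β₁ + (ε₁ ω - ε₀ ω))
    have h2 := abs_add_le β₁ (ε₁ ω - ε₀ ω)
    have h3 := abs_sub (ε₁ ω) (ε₀ ω)
    simp only [Pi.add_apply]
    linarith
  have hGint₂ : Integrable (fun ω => sg cstar c₁ (β₁ - (ε₁ ω - ε₀ ω))) μ := by
    refine Integrable.mono' (((integrable_const |β₁|).add hint₁.abs).add hint₀.abs)
      ((sg_meas _ _).comp (measurable_const.sub (hmeas₁.sub hmeas₀))).aestronglyMeasurable
      (ae_of_all _ fun ω => ?_)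
    rw [Real.norm_eq_abs]
    have h1 := sg_abs_le hc₁ hccs (β₁ - (ε₁ ω - ε₀ ω))
    have h2 := abs_sub β₁ (ε₁ ω - ε₀ ω)
    have h3 := abs_sub (ε₁ ω) (ε₀ ω)
    simp only [Pi.add_apply]
    linarith
  -- positivity of the common value
  have hsum : (0:ℝ) ≤ ∫ ω, β₁ * (sg cstar c₁ (β₁ + (ε₁ ω - ε₀ ω))
      + sg cstar c₁ (β₁ - (ε₁ ω - ε₀ ω))) ∂μ :=
    integral_nonneg fun ω => sg_key hc₁ hccs β₁ (ε₁ ω - ε₀ ω)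
  rw [integral_const_mul, integral_add hGint₁ hGint₂, ← hGeq] at hsum
  -- hsum : 0 ≤ β₁ * (I + I)
  intro x r hx hr
  by_cases hI : Integrable (fun ω => (ε₀ ω) ^ 2) μ
  · -- square-integrable case
    have hIsq₁ : Integrable (fun ω => (ε₁ ω) ^ 2) μ :=
      (hid.comp (measurable_id.pow_const 2)).integrable_iff.mp hI
    have hL0 : Integrable (fun ω => (ε₀ ω + -((b₁ ω - (β₁ + ε₁ ω - ε₀ ω)) / 2)) ^ 2) μ := by
      refine sq_shift hmeas₀ ((hUm.div_const 2).neg) hint₀ (K := cstar / 2)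
        (fun ω => ?_) hI
      rw [abs_neg, abs_div, abs_two]
      linarith [hu ω]
    have hL1 : Integrable (fun ω => (ε₁ ω + (b₁ ω - (β₁ + ε₁ ω - ε₀ ω)) / 2) ^ 2) μ := by
      refine sq_shift hmeas₁ (hUm.div_const 2) hint₁ (K := cstar / 2)
        (fun ω => ?_) hIsq₁
      rw [abs_div, abs_two]
      linarith [hu ω]
    have hR0 : Integrable (fun ω => (ε₁ ω + (β₁ + (b₁ ω - (β₁ + ε₁ ω - ε₀ ω)) / 2)) ^ 2) μ := by
      refine sq_shift hmeas₁ (measurable_const.add (hUm.div_const 2)) hint₁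
        (K := |β₁| + cstar / 2) (fun ω => ?_) hIsq₁
      have h1 := abs_add_le β₁ ((b₁ ω - (β₁ + ε₁ ω - ε₀ ω)) / 2)
      have h2 : |(b₁ ω - (β₁ + ε₁ ω - ε₀ ω)) / 2| ≤ cstar / 2 := by
        rw [abs_div, abs_two]; linarith [hu ω]
      linarith
    have hR1 : Integrable (fun ω => (ε₀ ω + (-β₁ + -((b₁ ω - (β₁ + ε₁ ω - ε₀ ω)) / 2))) ^ 2) μ := by
      refine sq_shift hmeas₀ (measurable_const.add ((hUm.div_const 2).neg)) hint₀
        (K := |β₁| + cstar / 2) (fun ω => ?_) hI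
      have h1 := abs_add_le (-β₁) (-((b₁ ω - (β₁ + ε₁ ω - ε₀ ω)) / 2))
      have h2 : |-((b₁ ω - (β₁ + ε₁ ω - ε₀ ω)) / 2)| ≤ cstar / 2 := by
        rw [abs_neg, abs_div, abs_two]; linarith [hu ω]
      rw [abs_neg] at h1
      linarith
    -- integrability of the two cross terms
    have hAint : Integrable (fun ω => b₁ ω * (β₁ + ε₀ ω + ε₁ ω)) μ :=
      (hR0.sub hL0).congr (ae_of_all _ fun ω => by simp only [Pi.sub_apply]; ring)
    have hBint : Integrable (fun ω => b₁ ω * (β₁ - ε₀ ω - ε₁ ω)) μ :=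
      (hR1.sub hL1).congr (ae_of_all _ fun ω => by simp only [Pi.sub_apply]; ring)
    -- A = B and A + B = 2 β₁ I
    have hApB : (∫ ω, b₁ ω * (β₁ + ε₀ ω + ε₁ ω) ∂μ) + (∫ ω, b₁ ω * (β₁ - ε₀ ω - ε₁ ω) ∂μ)
        = β₁ * ((∫ ω, sg cstar c₁ (β₁ + (ε₁ ω - ε₀ ω)) ∂μ)
            + (∫ ω, sg cstar c₁ (β₁ + (ε₁ ω - ε₀ ω)) ∂μ)) := by
      rw [← integral_add hAint hBint]
      have h : (fun ω => b₁ ω * (β₁ + ε₀ ω + ε₁ ω) + b₁ ω * (β₁ - ε₀ ω - ε₁ ω))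
          = fun ω => β₁ * (sg cstar c₁ (β₁ + (ε₁ ω - ε₀ ω)) * 2) := by
        funext ω
        rw [show β₁ + (ε₁ ω - ε₀ ω) = β₁ + ε₁ ω - ε₀ ω by ring, ← hb₁g ω]; ring
      rw [h, integral_const_mul, integral_mul_const]
      ring
    have hA : (0:ℝ) ≤ ∫ ω, b₁ ω * (β₁ + ε₀ ω + ε₁ ω) ∂μ := by linarith [hABeq, hApB, hsum]
    have hB : (0:ℝ) ≤ ∫ ω, b₁ ω * (β₁ - ε₀ ω - ε₁ ω) ∂μ := by linarith [hABeq, hApB, hsum]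
    rcases hx with hx | hx <;> rcases hr with hr | hr <;> subst hx <;> subst hr
    · exact le_rfl
    · -- x = 0, r = 1
      have hLrw : (fun ω => (b₀ ω + b₁ ω * 0 - β₀ - β₁ * 0) ^ 2)
          = fun ω => (ε₀ ω + -((b₁ ω - (β₁ + ε₁ ω - ε₀ ω)) / 2)) ^ 2 := by
        funext ω; rw [hb₀ ω, hy₀ ω, hy₁ ω]; ring
      have hRrw : (fun ω => (b₀ ω + b₁ ω * 1 - β₀ - β₁ * 0) ^ 2)
          = fun ω => (ε₁ ω + (β₁ + (b₁ ω - (β₁ + ε₁ ω - ε₀ ω)) / 2)) ^ 2 := by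
        funext ω; rw [hb₀ ω, hy₀ ω, hy₁ ω]; ring
      rw [hLrw, hRrw]
      have h1 : (∫ ω, (ε₁ ω + (β₁ + (b₁ ω - (β₁ + ε₁ ω - ε₀ ω)) / 2)) ^ 2 ∂μ)
          - (∫ ω, (ε₀ ω + -((b₁ ω - (β₁ + ε₁ ω - ε₀ ω)) / 2)) ^ 2 ∂μ)
          = ∫ ω, b₁ ω * (β₁ + ε₀ ω + ε₁ ω) ∂μ := by
        rw [← integral_sub hR0 hL0]; congr 1; funext ω; ring
      linarith
    · -- x = 1, r = 0
      have hLrw : (fun ω => (b₀ ω + b₁ ω * 1 - β₀ - β₁ * 1) ^ 2)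
          = fun ω => (ε₁ ω + (b₁ ω - (β₁ + ε₁ ω - ε₀ ω)) / 2) ^ 2 := by
        funext ω; rw [hb₀ ω, hy₀ ω, hy₁ ω]; ring
      have hRrw : (fun ω => (b₀ ω + b₁ ω * 0 - β₀ - β₁ * 1) ^ 2)
          = fun ω => (ε₀ ω + (-β₁ + -((b₁ ω - (β₁ + ε₁ ω - ε₀ ω)) / 2))) ^ 2 := by
        funext ω; rw [hb₀ ω, hy₀ ω, hy₁ ω]; ring
      rw [hLrw, hRrw]
      have h1 : (∫ ω, (ε₀ ω + (-β₁ + -((b₁ ω - (β₁ + ε₁ ω - ε₀ ω)) / 2))) ^ 2 ∂μ)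
          - (∫ ω, (ε₁ ω + (b₁ ω - (β₁ + ε₁ ω - ε₀ ω)) / 2) ^ 2 ∂μ)
          = ∫ ω, b₁ ω * (β₁ - ε₀ ω - ε₁ ω) ∂μ := by
        rw [← integral_sub hR1 hL1]; congr 1; funext ω; ring
      linarith
    · exact le_rfl
  · -- non square-integrable case : both sides are junk `0`
    have hIsq₁ : ¬ Integrable (fun ω => (ε₁ ω) ^ 2) μ := fun h =>
      hI ((hid.comp (measurable_id.pow_const 2)).integrable_iff.mpr h)
    have hnL0 : ¬ Integrable (fun ω => (ε₀ ω + -((b₁ ω - (β₁ + ε₁ ω - ε₀ ω)) / 2)) ^ 2) μ := by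
      intro h
      refine hI (sq_shift_rev hmeas₀ ((hUm.div_const 2).neg) hint₀ (K := cstar / 2)
        (fun ω => ?_) h)
      simp only [Pi.neg_apply]
      rw [abs_neg, abs_div, abs_two]
      linarith [hu ω]
    have hnL1 : ¬ Integrable (fun ω => (ε₁ ω + (b₁ ω - (β₁ + ε₁ ω - ε₀ ω)) / 2) ^ 2) μ := by
      intro h
      refine hIsq₁ (sq_shift_rev hmeas₁ (hUm.div_const 2) hint₁ (K := cstar / 2)
        (fun ω => ?_) h)
      rw [abs_div, abs_two]
      linarith [hu ω]
    have hnR0 : ¬ Integrable (fun ω => (ε₁ ω + (β₁ + (b₁ ω - (β₁ + ε₁ ω - ε₀ ω)) / 2)) ^ 2) μ := by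
      intro h
      refine hIsq₁ (sq_shift_rev hmeas₁ (measurable_const.add (hUm.div_const 2)) hint₁
        (K := |β₁| + cstar / 2) (fun ω => ?_) h)
      have h1 := abs_add_le β₁ ((b₁ ω - (β₁ + ε₁ ω - ε₀ ω)) / 2)
      have h2 : |(b₁ ω - (β₁ + ε₁ ω - ε₀ ω)) / 2| ≤ cstar / 2 := by
        rw [abs_div, abs_two]; linarith [hu ω]
      simp only [Pi.add_apply]
      linarith
    have hnR1 : ¬ Integrable
        (fun ω => (ε₀ ω + (-β₁ + -((b₁ ω - (β₁ + ε₁ ω - ε₀ ω)) / 2))) ^ 2) μ := by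
      intro h
      refine hI (sq_shift_rev hmeas₀ (measurable_const.add ((hUm.div_const 2).neg)) hint₀
        (K := |β₁| + cstar / 2) (fun ω => ?_) h)
      have h1 := abs_add_le (-β₁) (-((b₁ ω - (β₁ + ε₁ ω - ε₀ ω)) / 2))
      have h2 : |-((b₁ ω - (β₁ + ε₁ ω - ε₀ ω)) / 2)| ≤ cstar / 2 := by
        rw [abs_neg, abs_div, abs_two]; linarith [hu ω]
      rw [abs_neg] at h1
      simp only [Pi.add_apply, Pi.neg_apply]
      linarith
    rcases hx with hx | hx <;> rcases hr with hr | hr <;> subst hx <;> subst hr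
    · exact le_rfl
    · have hLrw : (fun ω => (b₀ ω + b₁ ω * 0 - β₀ - β₁ * 0) ^ 2)
          = fun ω => (ε₀ ω + -((b₁ ω - (β₁ + ε₁ ω - ε₀ ω)) / 2)) ^ 2 := by
        funext ω; rw [hb₀ ω, hy₀ ω, hy₁ ω]; ring
      have hRrw : (fun ω => (b₀ ω + b₁ ω * 1 - β₀ - β₁ * 0) ^ 2)
          = fun ω => (ε₁ ω + (β₁ + (b₁ ω - (β₁ + ε₁ ω - ε₀ ω)) / 2)) ^ 2 := by
        funext ω; rw [hb₀ ω, hy₀ ω, hy₁ ω]; ring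
      rw [hLrw, hRrw, integral_undef hnL0, integral_undef hnR0]
    · have hLrw : (fun ω => (b₀ ω + b₁ ω * 1 - β₀ - β₁ * 1) ^ 2)
          = fun ω => (ε₁ ω + (b₁ ω - (β₁ + ε₁ ω - ε₀ ω)) / 2) ^ 2 := by
        funext ω; rw [hb₀ ω, hy₀ ω, hy₁ ω]; ring
      have hRrw : (fun ω => (b₀ ω + b₁ ω * 0 - β₀ - β₁ * 1) ^ 2)
          = fun ω => (ε₀ ω + (-β₁ + -((b₁ ω - (β₁ + ε₁ ω - ε₀ ω)) / 2))) ^ 2 := by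
        funext ω; rw [hb₀ ω, hy₀ ω, hy₁ ω]; ring
      rw [hLrw, hRrw, integral_undef hnL1, integral_undef hnR1]
    · exact le_rfl
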